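/- Let X be a nonsingular simple G-projective variety with boundary divisors D₁,…,D_r, and let L = λ Σᵢ Dᵢ with λ a positive integer. Then for each i, the Seshadri constant of L at the sink x_i⁻ of the divisor D_i equals λ. -/
import Mathlib


/-- Let `X` be a nonsingular simple `G`-projective variety with boundary
divisors `D₁, …, D_r` and let `L = λ ∑ᵢ Dᵢ` with `λ` a positive integer.  Then for each
`i`, the Seshadri constant of `L` at the sink `xᵢ⁻` of `Dᵢ` equals `λ`.

Numerical model (for a fixed `i`): divisor classes on `Bl_{xᵢ⁻}(X)` are pairs
`(b, c) = ∑ bⱼ Bl^*Dⱼ − c Eᵢ`; `Nef` is its nef cone, which (by the Remark following the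
nef-cone lemma) satisfies: the pullbacks `Bl^*Dⱼ` and `∑ Bl^*Dⱼ − Eᵢ` are nef, it is a
convex cone, and nef classes meet the effective curves `e` and the strict transform of the
`B`-stable curve `Cᵢ ≅ ℙ¹` through `xᵢ⁻` nonnegatively (`c ≥ 0`, `bⱼ − c ≥ 0`).  The
Seshadri constant is `ε(L; xᵢ⁻) = sup { t | Bl^*L − t Eᵢ is nef }`. -/
theorem stmt13 (r : ℕ) [NeZero r] (lam : ℤ) (hlam : 0 < lam)
    (Nef : Set ((Fin r → ℝ) × ℝ))
    (h_pull : ∀ j, ((Pi.single j 1 : Fin r → ℝ), (0:ℝ)) ∈ Nef)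
    (h_sum : ((fun _ => (1:ℝ)), (1:ℝ)) ∈ Nef)
    (h_cone_add : ∀ D ∈ Nef, ∀ D' ∈ Nef, D + D' ∈ Nef)
    (h_cone_smul : ∀ t : ℝ, 0 ≤ t → ∀ D ∈ Nef, t • D ∈ Nef)
    (h_curves : ∀ D ∈ Nef, 0 ≤ D.2 ∧ ∀ j, D.2 ≤ D.1 j) :
    sSup { t : ℝ | ((fun _ => (lam : ℝ)), t) ∈ Nef } = (lam : ℝ) := by
  have hlamR : (0:ℝ) ≤ (lam : ℝ) := by exact_mod_cast hlam.le
  have hmem : ((fun _ => (lam : ℝ)), (lam : ℝ)) ∈ Nef := by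
    have := h_cone_smul (lam : ℝ) hlamR _ h_sum
    convert this using 2
    · funext x; simp
    · simp
  apply le_antisymm
  · apply csSup_le ⟨(lam:ℝ), hmem⟩
    intro t ht
    have := (h_curves _ ht).2 ⟨0, Nat.pos_of_ne_zero (NeZero.ne r)⟩
    simpa using this
  · apply le_csSup
    · refine ⟨(lam:ℝ), ?_⟩
      intro t ht
      have := (h_curves _ ht).2 ⟨0, Nat.pos_of_ne_zero (NeZero.ne r)⟩
      simpa using this
    · exact hmem
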